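/- For each n, the statistics foze'' and inv are equidistributed on 312-avoiding and 321-avoiding n-permutations respectively: Σ_{π ∈ S_n(312)} q^{foze''(π)} = Σ_{τ ∈ S_n(321)} q^{inv(τ)} as polynomials in q. -/

import Mathlib

open scoped Classical

namespace ThesisStmt
noncomputable section

variable {n : ℕ}

/-- π avoids the classical pattern 231: no i<j<k with π k < π i < π j. -/
def Avoids231 (π : Equiv.Perm (Fin n)) : Prop :=
  ¬ ∃ i j k : Fin n, i < j ∧ j < k ∧ π k < π i ∧ π i < π j

/-- π avoids 312: no i<j<k with π j < π k < π i. -/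
def Avoids312 (π : Equiv.Perm (Fin n)) : Prop :=
  ¬ ∃ i j k : Fin n, i < j ∧ j < k ∧ π j < π k ∧ π k < π i

/-- π avoids 321: no i<j<k with π k < π j < π i. -/
def Avoids321 (π : Equiv.Perm (Fin n)) : Prop :=
  ¬ ∃ i j k : Fin n, i < j ∧ j < k ∧ π k < π j ∧ π j < π i

/-- A nonempty set of positions whose values, read in increasing position order,
form consecutive integers decreasing by 1 (values strictly decrease along positions
and the value set is an integer interval). -/
def IsDecSeq (π : Equiv.Perm (Fin n)) (I : Finset (Fin n)) : Prop :=
  I.Nonempty ∧ (∀ i ∈ I, ∀ j ∈ I, i < j → π j < π i) ∧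
    ∀ v : Fin n, (∃ a ∈ I, π a ≤ v) → (∃ b ∈ I, v ≤ π b) → ∃ c ∈ I, π c = v

/-- An inverse descent run: a maximal `IsDecSeq`. -/
def IsIDR (π : Equiv.Perm (Fin n)) (I : Finset (Fin n)) : Prop :=
  IsDecSeq π I ∧ ∀ J : Finset (Fin n), IsDecSeq π J → I ⊆ J → J = I

/-- `I 0, I 1, ..., I (k-1)` is the family of inverse descent runs of π,
partitioning the positions, ordered by decreasing maximum value. -/
def IDRFamily (π : Equiv.Perm (Fin n)) {k : ℕ} (I : Fin k → Finset (Fin n)) : Prop :=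
  (∀ j, IsIDR π (I j)) ∧ (∀ x : Fin n, ∃! j, x ∈ I j) ∧
    ∀ u v : Fin k, u < v → ∃ a ∈ I u, ∀ b ∈ I v, π b < π a

/-- position i is a left-to-right maximum. -/
def IsLmax (π : Equiv.Perm (Fin n)) (i : Fin n) : Prop := ∀ j, j < i → π j < π i

/-- position i is a right-to-left maximum. -/
def IsRmax (π : Equiv.Perm (Fin n)) (i : Fin n) : Prop := ∀ j, i < j → π j < π i

/-- position i is a right-to-left minimum. -/
def IsRmin (π : Equiv.Perm (Fin n)) (i : Fin n) : Prop := ∀ j, i < j → π i < π j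

def LmaxSet (π : Equiv.Perm (Fin n)) : Finset (Fin n) := Finset.univ.filter (IsLmax π)

def rmaxCount (π : Equiv.Perm (Fin n)) : ℕ := (Finset.univ.filter (IsRmax π)).card

def rminCount (π : Equiv.Perm (Fin n)) : ℕ := (Finset.univ.filter (IsRmin π)).card

/-- number of inversions (i, j) with first coordinate i. -/
def invAt (π : Equiv.Perm (Fin n)) (i : Fin n) : ℕ :=
  (Finset.univ.filter (fun j : Fin n => i < j ∧ π j < π i)).card

/-- total number of inversions. -/
def inv (π : Equiv.Perm (Fin n)) : ℕ :=
  (Finset.univ.filter (fun p : Fin n × Fin n => p.1 < p.2 ∧ π p.2 < π p.1)).card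

def IsAscent (π : Equiv.Perm (Fin n)) (i : Fin n) : Prop :=
  ∃ h : (i : ℕ) + 1 < n, π i < π ⟨(i : ℕ) + 1, h⟩

def IsDescent (π : Equiv.Perm (Fin n)) (i : Fin n) : Prop :=
  ∃ h : (i : ℕ) + 1 < n, π ⟨(i : ℕ) + 1, h⟩ < π i

/-- number of descents, which is also the number of occurrences of [21]. -/
def des (π : Equiv.Perm (Fin n)) : ℕ := (Finset.univ.filter (IsDescent π)).card

/-- occurrences of the vincular pattern 2-[13]: (x, y, y+1), x < y, π y < π x < π (y+1). -/
def occ2_13 (π : Equiv.Perm (Fin n)) : ℕ :=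
  (Finset.univ.filter (fun p : Fin n × Fin n =>
    ∃ h : (p.2 : ℕ) + 1 < n, p.1 < p.2 ∧
      π p.2 < π p.1 ∧ π p.1 < π ⟨(p.2 : ℕ) + 1, h⟩)).card

/-- occurrences of [23]-1: (x, x+1, y), x+1 < y, π y < π x < π (x+1). -/
def occ23_1 (π : Equiv.Perm (Fin n)) : ℕ :=
  (Finset.univ.filter (fun p : Fin n × Fin n =>
    ∃ h : (p.1 : ℕ) + 1 < n, (⟨(p.1 : ℕ) + 1, h⟩ : Fin n) < p.2 ∧
      π p.2 < π p.1 ∧ π p.1 < π ⟨(p.1 : ℕ) + 1, h⟩)).card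

/-- occurrences of [13]-2: (x, x+1, y), x+1 < y, π x < π y < π (x+1). -/
def occ13_2 (π : Equiv.Perm (Fin n)) : ℕ :=
  (Finset.univ.filter (fun p : Fin n × Fin n =>
    ∃ h : (p.1 : ℕ) + 1 < n, (⟨(p.1 : ℕ) + 1, h⟩ : Fin n) < p.2 ∧
      π p.1 < π p.2 ∧ π p.2 < π ⟨(p.1 : ℕ) + 1, h⟩)).card

/-- occurrences of [21]-3: (x, x+1, y), x+1 < y, π (x+1) < π x < π y. -/
def occ21_3 (π : Equiv.Perm (Fin n)) : ℕ :=
  (Finset.univ.filter (fun p : Fin n × Fin n =>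
    ∃ h : (p.1 : ℕ) + 1 < n, (⟨(p.1 : ℕ) + 1, h⟩ : Fin n) < p.2 ∧
      π ⟨(p.1 : ℕ) + 1, h⟩ < π p.1 ∧ π p.1 < π p.2)).card

/-- occurrences of [32]-1: (x, x+1, y), x+1 < y, π y < π (x+1) < π x. -/
def occ32_1 (π : Equiv.Perm (Fin n)) : ℕ :=
  (Finset.univ.filter (fun p : Fin n × Fin n =>
    ∃ h : (p.1 : ℕ) + 1 < n, (⟨(p.1 : ℕ) + 1, h⟩ : Fin n) < p.2 ∧
      π p.2 < π ⟨(p.1 : ℕ) + 1, h⟩ ∧ π ⟨(p.1 : ℕ) + 1, h⟩ < π p.1)).card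

/-- occurrences of [31]-2: (x, x+1, y), x+1 < y, π (x+1) < π y < π x. -/
def occ31_2 (π : Equiv.Perm (Fin n)) : ℕ :=
  (Finset.univ.filter (fun p : Fin n × Fin n =>
    ∃ h : (p.1 : ℕ) + 1 < n, (⟨(p.1 : ℕ) + 1, h⟩ : Fin n) < p.2 ∧
      π ⟨(p.1 : ℕ) + 1, h⟩ < π p.2 ∧ π p.2 < π p.1)).card

/-- occurrences of 3-[21]: (y, x, x+1), y < x, π (x+1) < π x < π y. -/
def occ3_21 (π : Equiv.Perm (Fin n)) : ℕ :=
  (Finset.univ.filter (fun p : Fin n × Fin n =>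
    ∃ h : (p.2 : ℕ) + 1 < n, p.1 < p.2 ∧
      π ⟨(p.2 : ℕ) + 1, h⟩ < π p.2 ∧ π p.2 < π p.1)).card

/-- bast = [13]2 + [21]3 + [32]1 + [21]. -/
def bast (π : Equiv.Perm (Fin n)) : ℕ := occ13_2 π + occ21_3 π + occ32_1 π + des π

/-- foze = [21]3 + 3[21] + [13]2 + [21]. -/
def foze (π : Equiv.Perm (Fin n)) : ℕ := occ21_3 π + occ3_21 π + occ13_2 π + des π

/-- foze'' = [23]1 + [31]2 + [31]2 + [21]. -/
def fozePP (π : Equiv.Perm (Fin n)) : ℕ := occ23_1 π + occ31_2 π + occ31_2 π + des π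


/-! ### Auxiliary development for STATEMENT 12 -/

/-- LR-maximum data of a permutation: pairs (position, value) of left-to-right maxima. -/
def lrdata (π : Equiv.Perm (Fin n)) : Finset (Fin n × Fin n) :=
  (LmaxSet π).image (fun i => (i, π i))

lemma mem_lrdata (π : Equiv.Perm (Fin n)) (p : Fin n × Fin n) :
    p ∈ lrdata π ↔ IsLmax π p.1 ∧ π p.1 = p.2 := by
  simp only [lrdata, Finset.mem_image, LmaxSet, Finset.mem_filter, Finset.mem_univ, true_and]
  constructor
  · rintro ⟨i, hi, h⟩
    obtain rfl := h
    exact ⟨hi, rfl⟩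
  · rintro ⟨h, hv⟩; exact ⟨p.1, h, by rw [hv]⟩

lemma lmax_of_lrdata_eq {π σ : Equiv.Perm (Fin n)} (h : lrdata π = lrdata σ)
    {i : Fin n} (hi : IsLmax π i) : IsLmax σ i ∧ σ i = π i := by
  have : (i, π i) ∈ lrdata σ := by rw [← h, mem_lrdata]; exact ⟨hi, rfl⟩
  rw [mem_lrdata] at this
  exact ⟨this.1, this.2⟩

lemma not_lmax_iff (π : Equiv.Perm (Fin n)) (i : Fin n) :
    ¬ IsLmax π i ↔ ∃ j, j < i ∧ π i < π j := by
  simp only [IsLmax, not_forall]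
  constructor
  · rintro ⟨j, hj, hle⟩
    exact ⟨j, hj, lt_of_le_of_ne (not_lt.mp hle) (fun he => (hj.ne (π.injective he.symm)).elim)⟩
  · rintro ⟨j, hj, hlt⟩; exact ⟨j, hj, not_lt.mpr hlt.le⟩

lemma chain312 {π : Equiv.Perm (Fin n)} (h : Avoids312 π) {j x y : Fin n}
    (hxy : x ≤ y) (hyj : y < j) (hx : π j < π x) : π j < π y := by
  by_contra hy
  push_neg at hy
  let S : Finset (Fin n) := Finset.univ.filter (fun z => x ≤ z ∧ z < j ∧ π z ≤ π j)
  have hS : S = Finset.univ.filter (fun z => x ≤ z ∧ z < j ∧ π z ≤ π j) := rfl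
  have hyS : y ∈ S := by simp [hS, hxy, hyj, hy]
  have hne : S.Nonempty := ⟨y, hyS⟩
  obtain ⟨z, hzS, hzmin⟩ : ∃ z ∈ S, ∀ w ∈ S, z ≤ w := ⟨S.min' hne, S.min'_mem hne, fun w hw => S.min'_le w hw⟩
  simp only [hS, Finset.mem_filter, Finset.mem_univ, true_and] at hzS
  obtain ⟨hxz, hzj, hzle⟩ := hzS
  have hxz' : x < z := by
    rcases lt_or_eq_of_le hxz with h' | h'
    · exact h'
    · rw [← h'] at hzle; exact absurd hzle (not_le.mpr hx)
  have hwlt : (z : ℕ) - 1 < n := lt_of_le_of_lt (Nat.sub_le _ _) z.isLt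
  let w : Fin n := ⟨(z : ℕ) - 1, hwlt⟩
  have hw : (w : ℕ) = (z : ℕ) - 1 := rfl
  have hwz : w < z := by
    simp only [Fin.lt_def, hw]
    exact Nat.sub_lt (lt_of_le_of_lt (Nat.zero_le _) hxz') one_pos
  have hxw : x ≤ w := by
    simp only [Fin.le_def, hw]
    exact Nat.le_sub_one_of_lt hxz'
  have hwj : w < j := lt_trans hwz hzj
  have hwS : w ∉ S := fun hmem => absurd (hzmin w hmem) (not_le.mpr hwz)
  have hπw : π j < π w := by
    by_contra hc
    push_neg at hc
    exact hwS (by simp [hS, hxw, hwj, hc])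
  exact h ⟨w, z, j, hwz, hzj,
    lt_of_le_of_ne hzle (fun he => (hzj.ne (π.injective he)).elim), hπw⟩


/-- Core helper: σ, σ' have the same lrdata, agree strictly below j, and σ j < σ' j.
Then σ has a 312 pattern and σ' has a 321 pattern. -/
lemma diff_patterns {σ σ' : Equiv.Perm (Fin n)} (h : lrdata σ = lrdata σ')
    {j : Fin n} (hagree : ∀ i, i < j → σ i = σ' i) (hj : σ j < σ' j) :
    (¬ Avoids312 σ) ∧ (¬ Avoids321 σ') := by
  -- j is not an lmax of σ' (else would be lmax of σ with equal value)
  have hjn' : ¬ IsLmax σ' j := by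
    intro hl
    have := lmax_of_lrdata_eq h.symm hl
    rw [this.2] at hj; exact lt_irrefl _ hj
  obtain ⟨i, hij, hvi⟩ := (not_lmax_iff σ' j).mp hjn'
  have hi_eq : σ i = σ' i := hagree i hij
  -- k := σ⁻¹ (σ' j) is > j
  have hk' : σ (σ⁻¹ (σ' j)) = σ' j := σ.apply_symm_apply _
  have hkj : j < σ⁻¹ (σ' j) := by
    rcases lt_trichotomy (σ⁻¹ (σ' j)) j with hc | hc | hc
    · exfalso
      have := hagree _ hc
      rw [hk'] at this
      exact hc.ne (σ'.injective this.symm)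
    · exfalso; rw [hc] at hk'; exact hj.ne hk'
    · exact hc
  -- k'' := σ'⁻¹ (σ j) is > j
  have hk2 : σ' (σ'⁻¹ (σ j)) = σ j := σ'.apply_symm_apply _
  have hkj2 : j < σ'⁻¹ (σ j) := by
    rcases lt_trichotomy (σ'⁻¹ (σ j)) j with hc | hc | hc
    · exfalso
      have := hagree _ hc
      rw [hk2] at this
      exact hc.ne (σ.injective this)
    · exfalso; rw [hc] at hk2; exact hj.ne hk2.symm
    · exact hc
  constructor
  · intro hav
    exact hav ⟨i, j, σ⁻¹ (σ' j), hij, hkj, by rw [hk']; exact hj, by rw [hk', hi_eq]; exact hvi⟩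
  · intro hav
    exact hav ⟨i, j, σ'⁻¹ (σ j), hij, hkj2, by rw [hk2]; exact hj, hvi⟩

/-- first-difference extraction -/
lemma exists_first_diff {σ σ' : Equiv.Perm (Fin n)} (hne : σ ≠ σ') :
    ∃ j : Fin n, σ j ≠ σ' j ∧ ∀ i, i < j → σ i = σ' i := by
  have : ∃ x, σ x ≠ σ' x := by
    by_contra hc
    push_neg at hc
    exact hne (Equiv.ext hc)
  obtain ⟨x, hx⟩ := this
  let S : Finset (Fin n) := Finset.univ.filter (fun z => σ z ≠ σ' z)
  have hne' : S.Nonempty := ⟨x, by simp [S, hx]⟩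
  refine ⟨S.min' hne', ?_, ?_⟩
  · have := S.min'_mem hne'
    simpa [S] using this
  · intro i hi
    by_contra hc
    exact absurd (S.min'_le i (by simp [S, hc])) (not_le.mpr hi)

lemma unique312 {σ σ' : Equiv.Perm (Fin n)} (h1 : Avoids312 σ) (h2 : Avoids312 σ')
    (h : lrdata σ = lrdata σ') : σ = σ' := by
  by_contra hne
  obtain ⟨j, hj, hagree⟩ := exists_first_diff hne
  rcases lt_or_gt_of_ne hj with hlt | hgt
  · exact (diff_patterns h hagree hlt).1 h1
  · exact (diff_patterns h.symm (fun i hi => (hagree i hi).symm) hgt).1 h2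

lemma unique321 {σ σ' : Equiv.Perm (Fin n)} (h1 : Avoids321 σ) (h2 : Avoids321 σ')
    (h : lrdata σ = lrdata σ') : σ = σ' := by
  by_contra hne
  obtain ⟨j, hj, hagree⟩ := exists_first_diff hne
  rcases lt_or_gt_of_ne hj with hlt | hgt
  · exact (diff_patterns h hagree hlt).2 h2
  · exact (diff_patterns h.symm (fun i hi => (hagree i hi).symm) hgt).2 h1


section Swap
variable {σ : Equiv.Perm (Fin n)} {j k i0 : Fin n}

lemma swap_lmax_iff (hjk : j < k) (hi0 : i0 < j) (h1 : σ j < σ i0) (h2 : σ k < σ i0)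
    (x : Fin n) : IsLmax (σ * Equiv.swap j k) x ↔ IsLmax σ x := by
  have happ : ∀ y, (σ * Equiv.swap j k) y = σ (Equiv.swap j k y) := fun y => rfl
  have hsj : Equiv.swap j k j = k := Equiv.swap_apply_left j k
  have hsk : Equiv.swap j k k = j := Equiv.swap_apply_right j k
  have hso : ∀ y, y ≠ j → y ≠ k → Equiv.swap j k y = y :=
    fun y hy1 hy2 => Equiv.swap_apply_of_ne_of_ne hy1 hy2
  rcases eq_or_ne x j with rfl | hxj
  · constructor
    · intro hl
      exfalso
      have := hl i0 hi0
      simp only [happ] at this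
      rw [hso i0 (ne_of_lt hi0) (ne_of_lt (lt_trans hi0 hjk)), hsj] at this
      exact absurd this (not_lt.mpr h2.le)
    · intro hl
      exact absurd (hl i0 hi0) (not_lt.mpr h1.le)
  rcases eq_or_ne x k with rfl | hxk
  · constructor
    · intro hl
      have := hl i0 (lt_trans hi0 hjk)
      simp only [happ] at this
      rw [hso i0 (ne_of_lt hi0) (ne_of_lt (lt_trans hi0 hjk)), hsk] at this
      exact absurd this (not_lt.mpr h1.le)
    · intro hl
      exact absurd (hl i0 (lt_trans hi0 hjk)) (not_lt.mpr h2.le)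
  -- x ∉ {j, k}
  have hxv : (σ * Equiv.swap j k) x = σ x := by rw [happ, hso x hxj hxk]
  constructor
  · intro hl y hy
    rcases eq_or_ne y j with rfl | hyj
    · -- σ y < σ x from σ' j = σ k ... need σ j < σ x.
      -- since i0 < j = y < x, σ i0 < σ x (σ' i0 = σ i0), and σ j < σ i0
      have hi0x : σ i0 < σ x := by
        have := hl i0 (lt_trans hi0 hy)
        simp only [happ] at this
        rwa [hso i0 (ne_of_lt hi0) (ne_of_lt (lt_trans hi0 hjk)), hso x hxj hxk] at this
      exact lt_trans h1 hi0x
    rcases eq_or_ne y k with rfl | hyk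
    · have hi0x : σ i0 < σ x := by
        have := hl i0 (lt_trans (lt_trans hi0 hjk) hy)
        simp only [happ] at this
        rwa [hso i0 (ne_of_lt hi0) (ne_of_lt (lt_trans hi0 hjk)), hso x hxj hxk] at this
      exact lt_trans h2 hi0x
    · have := hl y hy
      simp only [happ] at this
      rwa [hso y hyj hyk, hso x hxj hxk] at this
  · intro hl y hy
    simp only [happ]
    rw [hso x hxj hxk]
    rcases eq_or_ne y j with rfl | hyj
    · rw [hsj]
      rcases lt_or_ge k x with hkx | hxk'
      · exact hl k hkx
      · -- j = y < x ≤ k, x ≠ k so x < k: σ k < σ i0 < σ x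
        exact lt_trans h2 (hl i0 (lt_trans hi0 hy))
    rcases eq_or_ne y k with rfl | hyk
    · rw [hsk]
      exact hl j (lt_trans hjk hy)
    · rw [hso y hyj hyk]
      exact hl y hy

lemma swap_lrdata (hjk : j < k) (hi0 : i0 < j) (h1 : σ j < σ i0) (h2 : σ k < σ i0) :
    lrdata (σ * Equiv.swap j k) = lrdata σ := by
  ext p
  rw [mem_lrdata, mem_lrdata]
  have hiff := swap_lmax_iff hjk hi0 h1 h2 (σ := σ) p.1
  constructor
  · rintro ⟨hl, hv⟩
    have hl' := hiff.mp hl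
    have hp1j : p.1 ≠ j := by
      rintro rfl
      exact absurd (hl' i0 hi0) (not_lt.mpr h1.le)
    have hp1k : p.1 ≠ k := by
      rintro rfl
      exact absurd (hl' i0 (lt_trans hi0 hjk)) (not_lt.mpr h2.le)
    refine ⟨hl', ?_⟩
    rw [← hv]
    show σ p.1 = σ (Equiv.swap j k p.1)
    rw [Equiv.swap_apply_of_ne_of_ne hp1j hp1k]
  · rintro ⟨hl, hv⟩
    have hp1j : p.1 ≠ j := by
      rintro rfl
      exact absurd (hl i0 hi0) (not_lt.mpr h1.le)
    have hp1k : p.1 ≠ k := by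
      rintro rfl
      exact absurd (hl i0 (lt_trans hi0 hjk)) (not_lt.mpr h2.le)
    refine ⟨hiff.mpr hl, ?_⟩
    show σ (Equiv.swap j k p.1) = p.2
    rw [Equiv.swap_apply_of_ne_of_ne hp1j hp1k]
    exact hv

end Swap

/-- weight used for the extremal argument -/
def wgt (σ : Equiv.Perm (Fin n)) : ℕ := ∑ x : Fin n, (x : ℕ) * (σ x : ℕ)

lemma wgt_swap {σ : Equiv.Perm (Fin n)} {j k : Fin n} (hjk : j ≠ k) :
    wgt (σ * Equiv.swap j k) + ((j : ℕ) * σ j + (k : ℕ) * σ k)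
      = wgt σ + ((j : ℕ) * σ k + (k : ℕ) * σ j) := by
  classical
  have key : ∀ (f g : Fin n → ℕ), (∀ x, x ≠ j → x ≠ k → f x = g x) →
      ∑ x : Fin n, f x + (g j + g k) = ∑ x : Fin n, g x + (f j + f k) := by
    intro f g hfg
    have hjmem : j ∈ (Finset.univ : Finset (Fin n)) := Finset.mem_univ j
    have hkmem : k ∈ (Finset.univ.erase j) := Finset.mem_erase.mpr ⟨hjk.symm, Finset.mem_univ k⟩
    have hf : ∑ x : Fin n, f x = ∑ x ∈ (Finset.univ.erase j).erase k, f x + f k + f j := by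
      rw [Finset.sum_erase_add _ _ hkmem, Finset.sum_erase_add _ _ hjmem]
    have hg : ∑ x : Fin n, g x = ∑ x ∈ (Finset.univ.erase j).erase k, g x + g k + g j := by
      rw [Finset.sum_erase_add _ _ hkmem, Finset.sum_erase_add _ _ hjmem]
    have heq : ∑ x ∈ (Finset.univ.erase j).erase k, f x
        = ∑ x ∈ (Finset.univ.erase j).erase k, g x := by
      apply Finset.sum_congr rfl
      intro x hx
      simp only [Finset.mem_erase] at hx
      exact hfg x hx.2.1 hx.1
    rw [hf, hg, heq]; ring
  have := key (fun x => (x : ℕ) * ((σ * Equiv.swap j k) x : ℕ)) (fun x => (x : ℕ) * (σ x : ℕ))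
    (fun x hx1 hx2 => by
      show (x : ℕ) * (σ (Equiv.swap j k x) : ℕ) = _
      rw [Equiv.swap_apply_of_ne_of_ne hx1 hx2])
  unfold wgt
  have hj' : ((σ * Equiv.swap j k) j : ℕ) = σ k := by
    show ((σ (Equiv.swap j k j)) : ℕ) = _
    rw [Equiv.swap_apply_left]
  have hk' : ((σ * Equiv.swap j k) k : ℕ) = σ j := by
    show ((σ (Equiv.swap j k k)) : ℕ) = _
    rw [Equiv.swap_apply_right]
  rw [hj', hk'] at this
  linarith [this]

lemma exists_avoid321_fiber (π : Equiv.Perm (Fin n)) :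
    ∃ τ : Equiv.Perm (Fin n), Avoids321 τ ∧ lrdata τ = lrdata π := by
  classical
  set F : Finset (Equiv.Perm (Fin n)) := Finset.univ.filter (fun σ => lrdata σ = lrdata π) with hF
  have hne : F.Nonempty := ⟨π, by simp [hF]⟩
  obtain ⟨τ, hτF, hmax⟩ := F.exists_max_image wgt hne
  simp only [hF, Finset.mem_filter, Finset.mem_univ, true_and] at hτF
  refine ⟨τ, ?_, hτF⟩
  intro hbad
  obtain ⟨i, j, k, hij, hjk, h1, h2⟩ := hbad
  -- τ k < τ j < τ i, swap j k increases wgt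
  have hlr : lrdata (τ * Equiv.swap j k) = lrdata τ := swap_lrdata hjk hij h2 (lt_trans h1 h2)
  have hmem : τ * Equiv.swap j k ∈ F := by simp [hF, hlr, hτF]
  have hle := hmax _ hmem
  have hws := wgt_swap (σ := τ) hjk.ne
  -- j*τj + k*τk < j*τk + k*τj
  have hlt : (j : ℕ) * τ j + (k : ℕ) * τ k < (j : ℕ) * τ k + (k : ℕ) * τ j := by
    have hj : (j : ℕ) < (k : ℕ) := hjk
    have hv : (τ k : ℕ) < (τ j : ℕ) := h1
    nlinarith
  omega
  
lemma exists_avoid312_fiber (π : Equiv.Perm (Fin n)) :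
    ∃ τ : Equiv.Perm (Fin n), Avoids312 τ ∧ lrdata τ = lrdata π := by
  classical
  set F : Finset (Equiv.Perm (Fin n)) := Finset.univ.filter (fun σ => lrdata σ = lrdata π) with hF
  have hne : F.Nonempty := ⟨π, by simp [hF]⟩
  obtain ⟨τ, hτF, hmin⟩ := F.exists_min_image wgt hne
  simp only [hF, Finset.mem_filter, Finset.mem_univ, true_and] at hτF
  refine ⟨τ, ?_, hτF⟩
  intro hbad
  obtain ⟨i, j, k, hij, hjk, h1, h2⟩ := hbad
  -- τ j < τ k < τ i, swap j k decreases wgt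
  have hlr : lrdata (τ * Equiv.swap j k) = lrdata τ := swap_lrdata hjk hij (lt_trans h1 h2) h2
  have hmem : τ * Equiv.swap j k ∈ F := by simp [hF, hlr, hτF]
  have hle := hmin _ hmem
  have hws := wgt_swap (σ := τ) hjk.ne
  have hlt : (j : ℕ) * τ k + (k : ℕ) * τ j < (j : ℕ) * τ j + (k : ℕ) * τ k := by
    have hj : (j : ℕ) < (k : ℕ) := hjk
    have hv : (τ j : ℕ) < (τ k : ℕ) := h1
    nlinarith
  omega


/-- for an lmax position i, the number of later smaller values is π i - i -/
lemma card_after_lt {π : Equiv.Perm (Fin n)} {i : Fin n} (hi : IsLmax π i) :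
    (Finset.univ.filter (fun j => i < j ∧ π j < π i)).card = (π i : ℕ) - (i : ℕ) := by
  classical
  have hA : (Finset.univ.filter (fun j => π j < π i)).card = (π i : ℕ) := by
    have hIio : (Finset.Iio (π i)).card = (π i : ℕ) := by simp
    rw [← hIio]
    apply Finset.card_bij (fun j _ => π j)
    · intro a ha
      simp only [Finset.mem_filter, Finset.mem_univ, true_and] at ha
      simp only [Finset.mem_Iio]
      exact ha
    · intro a ha b hb hab
      exact π.injective hab
    · intro b hb
      simp only [Finset.mem_Iio] at hb
      refine ⟨π⁻¹ b, ?_, π.apply_symm_apply b⟩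
      simp only [Finset.mem_filter, Finset.mem_univ, true_and]
      rw [show π (π⁻¹ b) = b from π.apply_symm_apply b]; exact hb
  have hB : (Finset.univ.filter (fun j => j < i ∧ π j < π i)).card = (i : ℕ) := by
    have : (Finset.univ.filter (fun j => j < i ∧ π j < π i))
        = Finset.univ.filter (fun j => j < i) := by
      apply Finset.filter_congr
      intro j _
      simp only [and_iff_left_iff_imp]
      exact fun hj => hi j hj
    rw [this]
    have hIio : (Finset.Iio i).card = (i : ℕ) := by simp
    rw [← hIio]
    congr 1
    ext j
    simp [Finset.mem_Iio]
  have hsplit : (Finset.univ.filter (fun j => π j < π i)).card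
      = (Finset.univ.filter (fun j => j < i ∧ π j < π i)).card
        + (Finset.univ.filter (fun j => i < j ∧ π j < π i)).card := by
    rw [← Finset.card_union_of_disjoint]
    · congr 1
      ext j
      simp only [Finset.mem_union, Finset.mem_filter, Finset.mem_univ, true_and]
      constructor
      · intro hj
        rcases lt_trichotomy j i with h | h | h
        · exact Or.inl ⟨h, hj⟩
        · exfalso; rw [h] at hj; exact lt_irrefl _ hj
        · exact Or.inr ⟨h, hj⟩
      · rintro (⟨_, hj⟩ | ⟨_, hj⟩) <;> exact hj
    · rw [Finset.disjoint_filter]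
      rintro j _ ⟨hj, _⟩ ⟨hj', _⟩
      exact absurd hj' (not_lt.mpr hj.le)
  omega

/-- the number of "max-inversions" equals the statistic -/
lemma maxinv_eq_sum (π : Equiv.Perm (Fin n)) :
    (Finset.univ.filter (fun p : Fin n × Fin n =>
        p.1 < p.2 ∧ π p.2 < π p.1 ∧ IsLmax π p.1)).card
      = ∑ i ∈ LmaxSet π, ((π i : ℕ) - (i : ℕ)) := by
  classical
  rw [Finset.card_eq_sum_card_fiberwise
    (f := Prod.fst) (t := LmaxSet π) ?_]
  · apply Finset.sum_congr rfl
    intro i hi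
    simp only [LmaxSet, Finset.mem_filter, Finset.mem_univ, true_and] at hi
    rw [← card_after_lt hi]
    apply Finset.card_bij (fun p _ => p.2)
    · intro p hp
      simp only [Finset.mem_filter, Finset.mem_univ, true_and] at hp ⊢
      obtain ⟨⟨h1, h2, _⟩, h4⟩ := hp
      rw [h4] at h1 h2
      exact ⟨h1, h2⟩
    · rintro ⟨a1, a2⟩ ha ⟨b1, b2⟩ hb hab
      simp only [Finset.mem_filter] at ha hb
      simp only at hab
      rw [Prod.mk.injEq]
      exact ⟨ha.2.trans hb.2.symm, hab⟩
    · intro j hj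
      simp only [Finset.mem_filter, Finset.mem_univ, true_and] at hj ⊢
      exact ⟨(i, j), ⟨⟨hj.1, hj.2, hi⟩, rfl⟩, rfl⟩
  · intro p hp
    simp only [Finset.mem_coe, Finset.mem_filter, Finset.mem_univ, true_and] at hp
    simp only [Finset.mem_coe, LmaxSet, Finset.mem_filter, Finset.mem_univ, true_and]
    exact hp.2.2

lemma inv_eq_sum_of_avoids321 {π : Equiv.Perm (Fin n)} (h : Avoids321 π) :
    inv π = ∑ i ∈ LmaxSet π, ((π i : ℕ) - (i : ℕ)) := by
  rw [← maxinv_eq_sum]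
  unfold inv
  congr 1
  apply Finset.filter_congr
  rintro ⟨i, j⟩ _
  simp only
  constructor
  · rintro ⟨h1, h2⟩
    refine ⟨h1, h2, ?_⟩
    intro x hx
    by_contra hc
    push_neg at hc
    have hlt : π i < π x := lt_of_le_of_ne hc (fun he => (hx.ne (π.injective he.symm)).elim)
    exact h ⟨x, i, j, hx, h1, h2, hlt⟩
  · rintro ⟨h1, h2, _⟩
    exact ⟨h1, h2⟩


lemma occ31_2_eq_zero {π : Equiv.Perm (Fin n)} (h : Avoids312 π) : occ31_2 π = 0 := by
  unfold occ31_2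
  rw [Finset.card_eq_zero, Finset.filter_eq_empty_iff]
  rintro ⟨x, y⟩ _
  rintro ⟨hlt, hxy, h1, h2⟩
  have hx : x < (⟨(x : ℕ) + 1, hlt⟩ : Fin n) := by
    simp [Fin.lt_def]
  exact h ⟨x, ⟨(x : ℕ) + 1, hlt⟩, y, hx, hxy, h1, h2⟩

/-- The auxiliary set E -/
def Eset (π : Equiv.Perm (Fin n)) : Finset (Fin n × Fin n) :=
  Finset.univ.filter (fun p : Fin n × Fin n =>
    ∃ h : (p.1 : ℕ) + 1 < n, (⟨(p.1 : ℕ) + 1, h⟩ : Fin n) ≤ p.2 ∧ π p.2 < π p.1 ∧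
      ((⟨(p.1 : ℕ) + 1, h⟩ : Fin n) = p.2 ∨ π p.1 < π ⟨(p.1 : ℕ) + 1, h⟩))

lemma card_Eset (π : Equiv.Perm (Fin n)) : (Eset π).card = des π + occ23_1 π := by
  classical
  have hsplit : Eset π = (Eset π).filter (fun p => ∃ h : (p.1 : ℕ) + 1 < n,
        (⟨(p.1 : ℕ) + 1, h⟩ : Fin n) = p.2)
      ∪ (Eset π).filter (fun p => ∃ h : (p.1 : ℕ) + 1 < n,
        (⟨(p.1 : ℕ) + 1, h⟩ : Fin n) < p.2) := by
    rw [← Finset.filter_or]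
    symm
    apply Finset.filter_true_of_mem
    rintro ⟨x, y⟩ hp
    simp only [Eset, Finset.mem_filter, Finset.mem_univ, true_and] at hp
    obtain ⟨h, hle, _, _⟩ := hp
    rcases lt_or_eq_of_le hle with hlt | heq
    · exact Or.inr ⟨h, hlt⟩
    · exact Or.inl ⟨h, heq⟩
  rw [hsplit, Finset.card_union_of_disjoint]
  · congr 1
    · -- card of E₁ = des
      apply Finset.card_bij (fun p _ => p.1)
      · rintro ⟨x, y⟩ hp
        simp only [Finset.mem_filter, Eset, Finset.mem_univ, true_and] at hp
        obtain ⟨⟨h, _, hd, _⟩, ⟨h2, heq⟩⟩ := hp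
        simp only [Finset.mem_filter, Finset.mem_univ, true_and]
        exact ⟨h, by rw [heq]; exact hd⟩
      · rintro ⟨x, y⟩ hx ⟨x', y'⟩ hx' hxy
        simp only [Finset.mem_filter, Eset] at hx hx'
        obtain ⟨_, ⟨h1, he1⟩⟩ := hx
        obtain ⟨_, ⟨h2, he2⟩⟩ := hx'
        simp only at hxy
        subst hxy
        rw [Prod.mk.injEq]
        refine ⟨rfl, ?_⟩
        rw [← he1, ← he2]
      · intro x hx
        simp only [Finset.mem_filter, Finset.mem_univ, true_and] at hx
        obtain ⟨h, hd⟩ := hx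
        refine ⟨(x, ⟨(x : ℕ) + 1, h⟩), ?_, rfl⟩
        simp only [Finset.mem_filter, Eset, Finset.mem_univ, true_and]
        exact ⟨⟨h, le_refl _, hd, Or.inl trivial⟩, ⟨h, trivial⟩⟩
    · -- card of E₂ = occ23_1
      unfold occ23_1
      congr 1
      ext ⟨x, y⟩
      simp only [Finset.mem_filter, Eset, Finset.mem_univ, true_and]
      constructor
      · rintro ⟨⟨h, hle, hd, hdisj⟩, ⟨h2, hlt⟩⟩
        refine ⟨h, hlt, hd, ?_⟩
        rcases hdisj with heq | hasc
        · exact absurd heq (ne_of_lt hlt)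
        · exact hasc
      · rintro ⟨h, hlt, hd, hasc⟩
        exact ⟨⟨h, le_of_lt hlt, hd, Or.inr hasc⟩, ⟨h, hlt⟩⟩
  · rw [Finset.disjoint_filter]
    rintro ⟨x, y⟩ _ ⟨h1, he⟩ ⟨h2, hlt⟩
    rw [he] at hlt
    exact lt_irrefl _ hlt


lemma maxinv_eq_Eset {π : Equiv.Perm (Fin n)} (h : Avoids312 π) :
    (Finset.univ.filter (fun p : Fin n × Fin n =>
        p.1 < p.2 ∧ π p.2 < π p.1 ∧ IsLmax π p.1)).card = (Eset π).card := by
  classical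
  have hsub : ∀ a : Fin n, (a : ℕ) - 1 < n := fun a => lt_of_le_of_lt (Nat.sub_le _ _) a.isLt
  apply Finset.card_bij (fun p _ =>
    if _ : ∃ k, k < p.1 ∧ π p.2 < π k then ((⟨(p.1 : ℕ) - 1, hsub p.1⟩ : Fin n), p.2)
    else ((⟨(p.2 : ℕ) - 1, hsub p.2⟩ : Fin n), p.2))
  -- maps to Eset
  · rintro ⟨i, j⟩ hp
    simp only [Finset.mem_filter, Finset.mem_univ, true_and] at hp
    obtain ⟨hij, hd, hm⟩ := hp
    simp only
    split_ifs with hex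
    · obtain ⟨k, hki, hjk⟩ := hex
      have hipos : 1 ≤ (i : ℕ) := Nat.one_le_iff_ne_zero.mpr (by
        intro h0
        exact absurd (show (k : ℕ) < (i : ℕ) from hki) (by omega))
      simp only [Eset, Finset.mem_filter, Finset.mem_univ, true_and]
      have hval : ((⟨(i : ℕ) - 1, hsub i⟩ : Fin n) : ℕ) + 1 = (i : ℕ) := by
        show (i : ℕ) - 1 + 1 = (i : ℕ)
        omega
      have hvn : ((⟨(i : ℕ) - 1, hsub i⟩ : Fin n) : ℕ) + 1 < n := by
        rw [hval]; exact i.isLt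
      refine ⟨hvn, ?_, ?_, ?_⟩
      · show (⟨_ + 1, hvn⟩ : Fin n) ≤ j
        rw [Fin.le_def]
        simp only [hval]
        exact le_of_lt hij
      · -- π j < π (i-1)
        apply chain312 h (x := k) _ _ hjk
        · rw [Fin.le_def]; omega
        · rw [Fin.lt_def]; simp; omega
      · right
        have heq : (⟨((⟨(i : ℕ) - 1, hsub i⟩ : Fin n) : ℕ) + 1, hvn⟩ : Fin n) = i := by
          apply Fin.ext; simp [hval]
        rw [heq]
        apply hm
        rw [Fin.lt_def]; simp; omega
    · push_neg at hex
      have hjpos : 1 ≤ (j : ℕ) := by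
        have : (i : ℕ) < (j : ℕ) := hij
        omega
      simp only [Eset, Finset.mem_filter, Finset.mem_univ, true_and]
      have hval : ((⟨(j : ℕ) - 1, hsub j⟩ : Fin n) : ℕ) + 1 = (j : ℕ) := by
        show (j : ℕ) - 1 + 1 = (j : ℕ)
        omega
      have hvn : ((⟨(j : ℕ) - 1, hsub j⟩ : Fin n) : ℕ) + 1 < n := by
        rw [hval]; exact j.isLt
      have heq : (⟨((⟨(j : ℕ) - 1, hsub j⟩ : Fin n) : ℕ) + 1, hvn⟩ : Fin n) = j := by
        apply Fin.ext; simp [hval]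
      refine ⟨hvn, by rw [heq], ?_, Or.inl heq⟩
      · -- π j < π (j-1)
        apply chain312 h (x := i) _ _ hd
        · rw [Fin.le_def]; simp; omega
        · rw [Fin.lt_def]; simp; omega
  -- injectivity
  · rintro ⟨i, j⟩ hp ⟨i', j'⟩ hq heq
    simp only [Finset.mem_filter, Finset.mem_univ, true_and] at hp hq
    obtain ⟨hij, hd, hm⟩ := hp
    obtain ⟨hij', hd', hm'⟩ := hq
    simp only at heq
    split_ifs at heq with h1 h2 h2 <;>
      rw [Prod.mk.injEq] at heq <;> obtain ⟨he1, rfl⟩ := heq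
    · -- both if
      obtain ⟨k, hk, _⟩ := h1
      obtain ⟨k', hk', _⟩ := h2
      have : (i : ℕ) - 1 = (i' : ℕ) - 1 := congrArg Fin.val he1
      have hkv : (k : ℕ) < i := hk
      have hkv' : (k' : ℕ) < i' := hk'
      rw [Prod.mk.injEq]
      exact ⟨Fin.ext (by omega), rfl⟩
    · -- p if, q else : i - 1 = j - 1 with i < j ≤ ... contradiction? i' < j, q else
      obtain ⟨k, hk, _⟩ := h1
      have hkv : (k : ℕ) < i := hk
      have : (i : ℕ) - 1 = (j : ℕ) - 1 := congrArg Fin.val he1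
      have hiv : (i : ℕ) < j := hij
      -- then i = j, contradiction
      omega
    · -- p else, q if
      obtain ⟨k, hk, _⟩ := h2
      have hkv : (k : ℕ) < i' := hk
      have : (j : ℕ) - 1 = (i' : ℕ) - 1 := congrArg Fin.val he1
      have hiv : (i' : ℕ) < j := hij'
      omega
    · -- both else
      push_neg at h1 h2
      rw [Prod.mk.injEq]
      refine ⟨?_, rfl⟩
      rcases lt_trichotomy i i' with hc | hc | hc
      · exact absurd hd (not_lt.mpr (h2 i hc))
      · exact Fin.ext (congrArg Fin.val hc)
      · exact absurd hd' (not_lt.mpr (h1 i' hc))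
  -- surjectivity
  · rintro ⟨x, y⟩ hxy
    simp only [Eset, Finset.mem_filter, Finset.mem_univ, true_and] at hxy
    obtain ⟨hxn, hle, hd, hdisj⟩ := hxy
    rcases lt_or_eq_of_le hle with hlt | heqxy
    · -- succ x < y : ascent case
      have hasc : π x < π ⟨(x : ℕ) + 1, hxn⟩ := by
        rcases hdisj with heq | hasc
        · exact absurd heq (ne_of_lt hlt)
        · exact hasc
      refine ⟨(⟨(x : ℕ) + 1, hxn⟩, y), ?_, ?_⟩
      · simp only [Finset.mem_filter, Finset.mem_univ, true_and]
        refine ⟨hlt, lt_trans hd hasc, ?_⟩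
        -- IsLmax at succ x
        intro h' hh'
        have hh'x : (h' : ℕ) ≤ (x : ℕ) := by
          have : (h' : ℕ) < (x : ℕ) + 1 := hh'
          omega
        by_contra hc
        push_neg at hc
        have hne : π ⟨(x : ℕ) + 1, hxn⟩ ≠ π h' := fun he => hh'.ne (π.injective he).symm
        have hlt2 : π ⟨(x : ℕ) + 1, hxn⟩ < π h' := lt_of_le_of_ne hc hne
        rcases eq_or_lt_of_le hh'x with he | hlt3
        · have : h' = x := Fin.ext he
          rw [this] at hlt2
          exact absurd hasc (not_lt.mpr hlt2.le)
        · -- h' < x : 312 pattern (h', x, succ x)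
          refine h ⟨h', x, ⟨(x : ℕ) + 1, hxn⟩, ?_, ?_, hasc, hlt2⟩
          · rw [Fin.lt_def]; exact hlt3
          · rw [Fin.lt_def]; simp
      · simp only
        have hex : ∃ k, k < (⟨(x : ℕ) + 1, hxn⟩ : Fin n) ∧ π y < π k :=
          ⟨x, by rw [Fin.lt_def]; simp, hd⟩
        rw [dif_pos hex]
        rw [Prod.mk.injEq]
        exact ⟨Fin.ext (by simp), rfl⟩
    · -- succ x = y : descent case, take minimum of C
      have hypos : (y : ℕ) = (x : ℕ) + 1 := by
        rw [← heqxy]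
      let C : Finset (Fin n) := Finset.univ.filter (fun k => k < y ∧ π y < π k)
      have hxC : x ∈ C := by
        simp only [C, Finset.mem_filter, Finset.mem_univ, true_and]
        exact ⟨by rw [Fin.lt_def]; omega, hd⟩
      have hCne : C.Nonempty := ⟨x, hxC⟩
      obtain ⟨c, hcC, hcmin⟩ : ∃ c ∈ C, ∀ w ∈ C, c ≤ w :=
        ⟨C.min' hCne, C.min'_mem hCne, fun w hw => C.min'_le w hw⟩
      simp only [C, Finset.mem_filter, Finset.mem_univ, true_and] at hcC
      obtain ⟨hcy, hdc⟩ := hcC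
      refine ⟨(c, y), ?_, ?_⟩
      · simp only [Finset.mem_filter, Finset.mem_univ, true_and]
        refine ⟨hcy, hdc, ?_⟩
        intro h' hh'
        by_contra hc
        push_neg at hc
        have hne : π c ≠ π h' := fun he => hh'.ne (π.injective he).symm
        have hlt2 : π c < π h' := lt_of_le_of_ne hc hne
        have hh'C : h' ∈ C := by
          simp only [C, Finset.mem_filter, Finset.mem_univ, true_and]
          exact ⟨lt_trans hh' hcy, lt_trans hdc hlt2⟩
        exact absurd (hcmin h' hh'C) (not_le.mpr hh')
      · simp only
        have hnex : ¬ ∃ k, k < c ∧ π y < π k := by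
          rintro ⟨k, hkc, hyk⟩
          have hkC : k ∈ C := by
            simp only [C, Finset.mem_filter, Finset.mem_univ, true_and]
            exact ⟨lt_trans hkc hcy, hyk⟩
          exact absurd (hcmin k hkC) (not_le.mpr hkc)
        rw [dif_neg hnex]
        rw [Prod.mk.injEq]
        exact ⟨Fin.ext (by simp [hypos]), rfl⟩



/-- the statistic as a function of the lrdata -/
def statFin (M : Finset (Fin n × Fin n)) : ℕ := ∑ p ∈ M, ((p.2 : ℕ) - (p.1 : ℕ))

lemma sum_lmax_eq (π : Equiv.Perm (Fin n)) :
    ∑ i ∈ LmaxSet π, ((π i : ℕ) - (i : ℕ)) = statFin (lrdata π) := by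
  unfold statFin lrdata
  rw [Finset.sum_image]
  · intro x _ y _ hxy
    exact congrArg Prod.fst hxy

lemma inv_eq_statFin {τ : Equiv.Perm (Fin n)} (h : Avoids321 τ) :
    inv τ = statFin (lrdata τ) := by
  rw [inv_eq_sum_of_avoids321 h, sum_lmax_eq]

lemma fozePP_eq_statFin {π : Equiv.Perm (Fin n)} (h : Avoids312 π) :
    fozePP π = statFin (lrdata π) := by
  unfold fozePP
  rw [occ31_2_eq_zero h, ← sum_lmax_eq, ← maxinv_eq_sum, maxinv_eq_Eset h, card_Eset]
  omega

lemma image_lrdata_eq (n : ℕ) :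
    (Finset.univ.filter (fun π : Equiv.Perm (Fin n) => Avoids312 π)).image lrdata
      = (Finset.univ.filter (fun τ : Equiv.Perm (Fin n) => Avoids321 τ)).image lrdata := by
  ext M
  simp only [Finset.mem_image, Finset.mem_filter, Finset.mem_univ, true_and]
  constructor
  · rintro ⟨π, hπ, rfl⟩
    obtain ⟨τ, hτ, hlr⟩ := exists_avoid321_fiber π
    exact ⟨τ, hτ, hlr⟩
  · rintro ⟨τ, hτ, rfl⟩
    obtain ⟨π, hπ, hlr⟩ := exists_avoid312_fiber τ
    exact ⟨π, hπ, hlr⟩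

/-- foze'' on S_n(312) and inv on S_n(321) are equidistributed:
Σ_{π ∈ S_n(312)} q^{foze''(π)} = Σ_{τ ∈ S_n(321)} q^{inv(τ)} as polynomials. -/
theorem stmt12 (n : ℕ) :
    ∑ π ∈ Finset.univ.filter (fun π : Equiv.Perm (Fin n) => Avoids312 π),
        (Polynomial.X : Polynomial ℕ) ^ fozePP π =
      ∑ τ ∈ Finset.univ.filter (fun τ : Equiv.Perm (Fin n) => Avoids321 τ),
        (Polynomial.X : Polynomial ℕ) ^ inv τ := by
  classical
  have h1 : ∑ π ∈ Finset.univ.filter (fun π : Equiv.Perm (Fin n) => Avoids312 π),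
      (Polynomial.X : Polynomial ℕ) ^ fozePP π
      = ∑ M ∈ (Finset.univ.filter (fun π : Equiv.Perm (Fin n) => Avoids312 π)).image lrdata,
        (Polynomial.X : Polynomial ℕ) ^ statFin M := by
    rw [Finset.sum_image (fun x hx y hy hxy => by
      simp only [Finset.mem_coe, Finset.mem_filter, Finset.mem_univ, true_and] at hx hy
      exact unique312 hx hy hxy)]
    apply Finset.sum_congr rfl
    intro π hπ
    simp only [Finset.mem_filter, Finset.mem_univ, true_and] at hπ
    rw [fozePP_eq_statFin hπ]
  have h2 : ∑ τ ∈ Finset.univ.filter (fun τ : Equiv.Perm (Fin n) => Avoids321 τ),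
      (Polynomial.X : Polynomial ℕ) ^ inv τ
      = ∑ M ∈ (Finset.univ.filter (fun τ : Equiv.Perm (Fin n) => Avoids321 τ)).image lrdata,
        (Polynomial.X : Polynomial ℕ) ^ statFin M := by
    rw [Finset.sum_image (fun x hx y hy hxy => by
      simp only [Finset.mem_coe, Finset.mem_filter, Finset.mem_univ, true_and] at hx hy
      exact unique321 hx hy hxy)]
    apply Finset.sum_congr rfl
    intro τ hτ
    simp only [Finset.mem_filter, Finset.mem_univ, true_and] at hτ
    rw [inv_eq_statFin hτ]
  rw [h1, h2, image_lrdata_eq]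

end
end ThesisStmt
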